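/- arXiv:1311.7236 — 4 statements merged into one kernel-verified Lean document; each statement's English description precedes it below -/
import Mathlib

section
/- Let A be a finite set with |A| = 2^(m+d), let f : A → Fin (2^k) and π : A → Fin (2^m) be functions with m > k ≥ 0 and every fiber of π having exactly 2^d elements. Call a ∈ A ambiguous if there exists a' ∈ A with f a' = f a and π a' ≠ π a. Then strictly more than half of the elements of A are ambiguous. -/
/-- If `|A| = 2^(m+d)`, `f : A → Fin (2^k)`, `π : A → Fin (2^m)` with `m > k`
and every fiber of `π` of size exactly `2^d`, then strictly more than half of
the elements of `A` are ambiguous, i.e. admit some `a'` with the same `f`-value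
but a different `π`-value. -/
theorem majority_ambiguous (A : Type*) [Finite A] (m d k : ℕ) (hmk : k < m)
    (hA : Nat.card A = 2 ^ (m + d))
    (f : A → Fin (2 ^ k)) (π : A → Fin (2 ^ m))
    (hfib : ∀ c : Fin (2 ^ m), Nat.card {a : A // π a = c} = 2 ^ d) :
    Nat.card A < 2 * Nat.card {a : A // ∃ a', f a' = f a ∧ π a' ≠ π a} := by
  classical
  cases nonempty_fintype A
  simp only [Nat.card_eq_fintype_card] at *
  have hfib' : ∀ c, (Finset.univ.filter (fun a : A => π a = c)).card = 2 ^ d := by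
    intro c
    have := hfib c
    rwa [Fintype.card_subtype] at this
  set P : A → Prop := fun a => ∃ a', f a' = f a ∧ π a' ≠ π a with hP
  set N : Finset A := Finset.univ.filter (fun a => ¬ P a) with hN
  -- on N, π is constant on f-fibers
  have hNconst : ∀ a ∈ N, ∀ a', f a' = f a → π a' = π a := by
    intro a ha a' hf
    rw [hN, Finset.mem_filter] at ha
    by_contra h
    exact ha.2 ⟨a', hf, h⟩
  -- π-image of N is small
  have hAne : Nonempty A := by
    rw [← Fintype.card_pos_iff, hA]; positivity
  obtain ⟨a⟩ := hAne
  set g : Fin (2 ^ k) → Fin (2 ^ m) := fun c =>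
    if h : ∃ b ∈ N, f b = c then π h.choose else π a with hg
  have himg : N.image π ⊆ Finset.univ.image g := by
    intro p hp
    rw [Finset.mem_image] at hp
    obtain ⟨b, hb, rfl⟩ := hp
    have hex : ∃ b' ∈ N, f b' = f b := ⟨b, hb, rfl⟩
    have hc := hex.choose_spec
    rw [Finset.mem_image]
    refine ⟨f b, Finset.mem_univ _, ?_⟩
    rw [hg]
    simp only [dif_pos hex]
    exact hNconst b hb _ hc.2
  have hcard_im : (N.image π).card < 2 ^ m := by
    calc (N.image π).card ≤ (Finset.univ.image g).card := Finset.card_le_card himg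
      _ ≤ (Finset.univ : Finset (Fin (2 ^ k))).card := Finset.card_image_le
      _ = 2 ^ k := by simp
      _ < 2 ^ m := Nat.pow_lt_pow_right one_lt_two hmk
  -- get a π-value not attained on N
  obtain ⟨p₀, hp₀⟩ : ∃ p₀ : Fin (2 ^ m), p₀ ∉ N.image π := by
    by_contra h
    push_neg at h
    have : (Finset.univ : Finset (Fin (2 ^ m))) ⊆ N.image π := fun p _ => h p
    have := Finset.card_le_card this
    simp only [Finset.card_univ, Fintype.card_fin] at this
    omega
  -- an element of the fiber of p₀; it is ambiguous, and its f-value avoids f(N)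
  obtain ⟨a₀, ha₀⟩ : ∃ a₀ : A, π a₀ = p₀ := by
    have := hfib' p₀
    have hpos : 0 < (Finset.univ.filter (fun a : A => π a = p₀)).card := by
      rw [this]; positivity
    obtain ⟨b, hb⟩ := Finset.card_pos.mp hpos
    exact ⟨b, (Finset.mem_filter.mp hb).2⟩
  have hfa₀ : f a₀ ∉ N.image f := by
    intro h
    rw [Finset.mem_image] at h
    obtain ⟨b, hb, hfb⟩ := h
    have : π a₀ = π b := hNconst b hb a₀ hfb.symm
    exact hp₀ (Finset.mem_image.mpr ⟨b, hb, by rw [← this, ha₀]⟩)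
  -- f-image of N has at most 2^k - 1 elements
  have hfim : (N.image f).card ≤ 2 ^ k - 1 := by
    have hsub : N.image f ⊆ Finset.univ.erase (f a₀) := by
      intro c hc
      exact Finset.mem_erase.mpr ⟨fun h => hfa₀ (h ▸ hc), Finset.mem_univ _⟩
    calc (N.image f).card ≤ (Finset.univ.erase (f a₀)).card := Finset.card_le_card hsub
      _ = 2 ^ k - 1 := by rw [Finset.card_erase_of_mem (Finset.mem_univ _)]; simp
  -- each f-fiber within N has at most 2^d elements
  have hNcard : N.card ≤ (2 ^ k - 1) * 2 ^ d := by
    rw [Finset.card_eq_sum_card_image f N]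
    have hbd : ∀ c ∈ N.image f, (N.filter (fun a => f a = c)).card ≤ 2 ^ d := by
      intro c hc
      obtain ⟨b, hb, hfb⟩ := Finset.mem_image.mp hc
      have hsub : N.filter (fun a => f a = c) ⊆
          Finset.univ.filter (fun a : A => π a = π b) := by
        intro x hx
        rw [Finset.mem_filter] at hx
        exact Finset.mem_filter.mpr ⟨Finset.mem_univ _,
          hNconst b hb x (hx.2.trans hfb.symm)⟩
      calc (N.filter (fun a => f a = c)).card
          ≤ (Finset.univ.filter (fun a : A => π a = π b)).card := Finset.card_le_card hsub
        _ = 2 ^ d := hfib' (π b)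
    calc ∑ c ∈ N.image f, (N.filter (fun a => f a = c)).card
        ≤ ∑ _c ∈ N.image f, 2 ^ d := Finset.sum_le_sum hbd
      _ = (N.image f).card * 2 ^ d := by rw [Finset.sum_const, smul_eq_mul]
      _ ≤ (2 ^ k - 1) * 2 ^ d := Nat.mul_le_mul_right _ hfim
  -- combine
  have hsplit : (Finset.univ.filter P).card + N.card = Fintype.card A := by
    rw [hN]
    simpa using Finset.card_filter_add_card_filter_not (s := (Finset.univ : Finset A)) (p := P)
  have hcardAmb : Fintype.card {a : A // ∃ a', f a' = f a ∧ π a' ≠ π a}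
      = (Finset.univ.filter P).card := Fintype.card_subtype _
  have h2 : 2 * ((2 ^ k - 1) * 2 ^ d) < 2 ^ (m + d) := by
    have h1 : 2 * ((2 ^ k - 1) * 2 ^ d) < 2 * (2 ^ k * 2 ^ d) := by
      have hk : (0:ℕ) < 2 ^ k := Nat.pow_pos (n := k) (by norm_num)
      have hd : (0:ℕ) < 2 ^ d := Nat.pow_pos (n := d) (by norm_num)
      have h := (mul_lt_mul_iff_left₀ hd).mpr (show 2 ^ k - 1 < 2 ^ k by omega)
      exact (mul_lt_mul_iff_right₀ (show (0:ℕ) < 2 by norm_num)).mpr h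
    calc 2 * ((2 ^ k - 1) * 2 ^ d) < 2 * (2 ^ k * 2 ^ d) := h1
      _ = 2 ^ (k + 1 + d) := by ring
      _ ≤ 2 ^ (m + d) := Nat.pow_le_pow_right (by norm_num) (by omega)
  rw [hcardAmb, hA]
  omega
end

section
/- Let X be a finite set of variables, n ≥ 1, and for each i ∈ Fin n let W i ⊆ X be the set of variables visible to service i, with ⋃ i, W i = X. Suppose each service has exactly one private variable, i.e., for each i there is x_i ∈ W i with x_i ∉ W j for all j ≠ i, and the x_i are the only such private variables (|W i \ ⋃_{j≠i} W j| = 1). Let V = X \ {x_i : i ∈ Fin n}. Then there exists a flat tracking function iff there exists some i with V ⊆ W i. A flat tracking function is a function t : Fin n → Set X with t i ⊆ W i for each i, ⋃ i, t i = X, and at most one index i with |t i| ≥ 2. -/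
/-- Characterization of flat tracking functions for a flat protocol in which
every service `i` has exactly one private variable `x i`: a flat tracking
function exists iff some service sees all non-private variables. -/
theorem flat_tracking_iff (X : Type*) [Finite X] (n : ℕ) (hn : 1 ≤ n)
    (W : Fin n → Set X) (hcover : (⋃ i, W i) = Set.univ)
    (x : Fin n → X)
    (hpriv : ∀ i, {v | v ∈ W i ∧ ∀ j, j ≠ i → v ∉ W j} = {x i}) :
    (∃ t : Fin n → Set X,
        (∀ i, t i ⊆ W i) ∧ (⋃ i, t i) = Set.univ ∧
        ∀ i j, 2 ≤ (t i).ncard → 2 ≤ (t j).ncard → i = j) ↔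
      ∃ i, {v : X | v ∉ Set.range x} ⊆ W i := by
  have hxmem : ∀ i, x i ∈ W i ∧ ∀ j, j ≠ i → x i ∉ W j := by
    intro i
    have : x i ∈ {v | v ∈ W i ∧ ∀ j, j ≠ i → v ∉ W j} := by
      rw [hpriv i]; rfl
    exact this
  constructor
  · rintro ⟨t, hsub, hunion, huniq⟩
    -- each x j must be in t j
    have hxt : ∀ j, x j ∈ t j := by
      intro j
      have : x j ∈ ⋃ i, t i := by rw [hunion]; trivial
      obtain ⟨k, hk⟩ := Set.mem_iUnion.mp this
      by_cases hkj : k = j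
      · exact hkj ▸ hk
      · exact absurd (hsub k hk) ((hxmem j).2 k hkj)
    by_cases hV : ∃ v : X, v ∉ Set.range x
    · obtain ⟨v₀, hv₀⟩ := hV
      have hv₀' : v₀ ∈ ⋃ i, t i := by rw [hunion]; trivial
      obtain ⟨k₀, hk₀⟩ := Set.mem_iUnion.mp hv₀'
      refine ⟨k₀, ?_⟩
      intro v hv
      have hv' : v ∈ ⋃ i, t i := by rw [hunion]; trivial
      obtain ⟨k, hk⟩ := Set.mem_iUnion.mp hv'
      have hcard : ∀ (m : Fin n) (w : X), w ∉ Set.range x → w ∈ t m →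
          2 ≤ (t m).ncard := by
        intro m w hw hwm
        have hne : x m ≠ w := fun h => hw ⟨m, h⟩
        have hpairsub : ({x m, w} : Set X) ⊆ t m := by
          intro z hz
          rcases hz with h | h
          · exact h ▸ hxt m
          · exact h ▸ hwm
        have := Set.ncard_le_ncard hpairsub (Set.toFinite _)
        rwa [Set.ncard_pair hne] at this
      have hkk : k = k₀ :=
        huniq k k₀ (hcard k v hv hk) (hcard k₀ v₀ hv₀ hk₀)
      exact hsub k₀ (hkk ▸ hk)
    · refine ⟨⟨0, hn⟩, ?_⟩
      intro v hv
      exact absurd hv (not_not.mpr (not_exists.mp hV v |> not_not.mp))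
  · rintro ⟨i, hi⟩
    refine ⟨fun j => if j = i then W i else {x j}, ?_, ?_, ?_⟩
    · intro j
      by_cases h : j = i
      · simp [h]
      · simp only [h, if_false]
        exact Set.singleton_subset_iff.mpr (hxmem j).1
    · apply Set.eq_univ_of_forall
      intro v
      by_cases hv : v ∈ Set.range x
      · obtain ⟨j, hj⟩ := hv
        by_cases h : j = i
        · exact Set.mem_iUnion.mpr ⟨i, by simp [← hj, h, (hxmem i).1]⟩
        · exact Set.mem_iUnion.mpr ⟨j, by simp [h, ← hj]⟩
      · exact Set.mem_iUnion.mpr ⟨i, by simpa using hi hv⟩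
    · intro j k hj hk
      by_cases h1 : j = i
      · by_cases h2 : k = i
        · rw [h1, h2]
        · simp [h2, Set.ncard_singleton] at hk
      · simp [h1, Set.ncard_singleton] at hj
end

section
/- Let X be a finite set, n ≥ 1, and W : Fin n → Set X with ⋃ i, W i = X. Suppose t : Fin n → Set X satisfies t i ⊆ W i for all i, ⋃ i, t i = X, and there is at most one index i with 2 ≤ |t i|. If for each i there is a private variable x_i ∈ W i \ ⋃_{j ≠ i} W j, then x_j ∈ t j for every j, and there exists an index i₀ with X \ ({x_j : j ∈ Fin n} \ {x_{i₀}}) ⊆ W i₀. -/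
/-- Any flat tracking function `t` for a flat protocol in which each service
`i` has a private variable `x i` must put `x j` into `t j` for every `j`, and
some single service `i₀` must see all variables except the private variables
of the other services. -/
theorem flat_tracking_private_vars (X : Type*) [Finite X] (n : ℕ) (hn : 1 ≤ n)
    (W : Fin n → Set X) (hcover : (⋃ i, W i) = Set.univ)
    (t : Fin n → Set X) (hsub : ∀ i, t i ⊆ W i)
    (htcover : (⋃ i, t i) = Set.univ)
    (hone : ∀ i j, 2 ≤ (t i).ncard → 2 ≤ (t j).ncard → i = j)
    (x : Fin n → X)
    (hpriv : ∀ i, x i ∈ W i ∧ ∀ j, j ≠ i → x i ∉ W j) :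
    (∀ j, x j ∈ t j) ∧
      ∃ i₀, Set.univ \ (Set.range x \ {x i₀}) ⊆ W i₀ := by
  have hx : ∀ j, x j ∈ t j := by
    intro j
    have : x j ∈ ⋃ i, t i := htcover ▸ Set.mem_univ _
    obtain ⟨i, hi⟩ := Set.mem_iUnion.1 this
    rcases eq_or_ne i j with rfl | hne
    · exact hi
    · exact absurd (hsub i hi) ((hpriv j).2 i hne)
  refine ⟨hx, ?_⟩
  by_cases hbig : ∃ i, 2 ≤ (t i).ncard
  · obtain ⟨i₀, hi₀⟩ := hbig
    refine ⟨i₀, ?_⟩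
    intro y hy
    have : y ∈ ⋃ i, t i := htcover ▸ Set.mem_univ _
    obtain ⟨j, hj⟩ := Set.mem_iUnion.1 this
    rcases eq_or_ne j i₀ with rfl | hne
    · exact hsub _ hj
    · have hle : (t j).ncard ≤ 1 := by
        by_contra h
        exact hne (hone j i₀ (by omega) hi₀)
      have hyx : y = x j :=
        (Set.ncard_le_one (Set.toFinite _)).1 hle y hj (x j) (hx j)
      have hy0 : y = x i₀ := by
        by_contra hne'
        exact hy.2 ⟨⟨j, hyx.symm⟩, hne'⟩
      exact absurd (hy0 ▸ hsub j hj) ((hpriv i₀).2 j hne)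
  · push_neg at hbig
    refine ⟨⟨0, hn⟩, ?_⟩
    intro y hy
    have : y ∈ ⋃ i, t i := htcover ▸ Set.mem_univ _
    obtain ⟨j, hj⟩ := Set.mem_iUnion.1 this
    have hyx : y = x j :=
      (Set.ncard_le_one (Set.toFinite _)).1 (by have := hbig j; omega) y hj (x j) (hx j)
    have hy0 : y = x ⟨0, hn⟩ := by
      by_contra hne'
      exact hy.2 ⟨⟨j, hyx.symm⟩, hne'⟩
    exact hy0 ▸ (hpriv _).1
end

section
/- Let G = (V, E) be a finite directed acyclic graph and (u, v) ∈ E with u, v distinct. Define the u-v-bypass G' by removing the edge (u, v) and adding, for every edge (w, u) ∈ E, the edge (w, v). Then G' is again a directed acyclic graph, and reachability in G' implies reachability in G (every directed path in G' from a to b yields a directed path in G from a to b). -/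
/-- The `u`-`v`-bypass of the edge relation `E`: the edge `(u, v)` is removed
and, for every edge `(w, u)`, an edge `(w, v)` is added. -/
def bypassRel {V : Type*} (E : V → V → Prop) (u v : V) : V → V → Prop :=
  fun a b => (E a b ∧ ¬(a = u ∧ b = v)) ∨ (E a u ∧ b = v)

/-- The bypass of an edge `(u, v)` of a finite DAG is again a DAG, and every
directed path in the bypass yields a directed path in the original graph. -/
theorem bypass_dag_reach {V : Type*} [Fintype V] (E : V → V → Prop)
    (hacyc : ∀ w, ¬ Relation.TransGen E w w) (u v : V) (he : E u v)
    (huv : u ≠ v) :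
    (∀ w : V, ¬ Relation.TransGen (bypassRel E u v) w w) ∧
    ∀ a b : V, Relation.ReflTransGen (bypassRel E u v) a b →
      Relation.ReflTransGen E a b := by
  have hsub : ∀ a b, bypassRel E u v a b → Relation.TransGen E a b := by
    rintro a b (⟨h, -⟩ | ⟨h, rfl⟩)
    · exact Relation.TransGen.single h
    · exact Relation.TransGen.head h (Relation.TransGen.single he)
  have htg : ∀ a b, Relation.TransGen (bypassRel E u v) a b →
      Relation.TransGen E a b := by
    intro a b h
    have := Relation.TransGen.mono hsub a b h
    rwa [Relation.transGen_idem] at this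
  refine ⟨fun w hw => hacyc w (htg w w hw), fun a b h => ?_⟩
  induction h with
  | refl => exact Relation.ReflTransGen.refl
  | tail _ h ih => exact ih.trans (htg _ _ (Relation.TransGen.single h)).to_reflTransGen
end
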